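/- Let n ≥ 1, let Dⁿ denote the closed unit ball in Euclidean space ℝⁿ and Sⁿ⁻¹ its boundary sphere. Let A be a topological space and let f : A → ℝⁿ be a topological embedding with range contained in Dⁿ such that the range of f has empty interior in ℝⁿ. Let T be a countable subset of the open unit ball. Then there exists a topological embedding g : A → ℝⁿ with range contained in Dⁿ \ T such that f⁻¹(Sⁿ⁻¹) = g⁻¹(Sⁿ⁻¹) and g(a) = f(a) for every a ∈ A with f(a) ∈ Sⁿ⁻¹. -/

import Mathlib

set_option linter.unusedSectionVars false
set_option linter.unusedVariables false

open Metric Set Filter Topology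

noncomputable section AvoidCountable

variable {E : Type*} [NormedAddCommGroup E] [NormedSpace ℝ E] [CompleteSpace E]


/-- coefficient of the radial push bump. -/
def lamb (t : E) (r : ℝ) (x : E) : ℝ := max (1 - ‖x - t‖ / r) 0

/-- the push map: identity outside `ball t r`, translates by `w` near `t`. -/
def pushFn (t w : E) (r : ℝ) (x : E) : E := x + lamb t r x • w

variable {t w x y q : E} {r : ℝ}

lemma lamb_nonneg : 0 ≤ lamb t r x := le_max_right _ _

lemma lamb_le_one (hr : 0 < r) : lamb t r x ≤ 1 := by
  have h : 0 ≤ ‖x - t‖ / r := by positivity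
  exact max_le (by linarith) zero_le_one

lemma lamb_eq_zero (h : r ≤ ‖x - t‖) (hr : 0 < r) : lamb t r x = 0 :=
  max_eq_right (by rw [sub_nonpos]; exact (le_div_iff₀ hr).2 (by linarith)|>.trans_eq rfl)

lemma lamb_sub_le (hr : 0 < r) : |lamb t r x - lamb t r y| ≤ ‖x - y‖ / r := by
  refine (abs_max_sub_max_le_abs _ _ _).trans ?_
  have h : (1 - ‖x - t‖ / r) - (1 - ‖y - t‖ / r) = (‖y - t‖ - ‖x - t‖) / r := by ring
  rw [h, abs_div, abs_of_pos hr]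
  gcongr
  calc |‖y - t‖ - ‖x - t‖| ≤ ‖(y - t) - (x - t)‖ := abs_norm_sub_norm_le _ _
    _ = ‖x - y‖ := by rw [show (y - t) - (x - t) = -(x - y) by abel, norm_neg]

lemma pushFun_sub (hr : 0 < r) :
    ‖pushFn t w r x - pushFn t w r y - (x - y)‖ ≤ ‖w‖ / r * ‖x - y‖ := by
  have h : pushFn t w r x - pushFn t w r y - (x - y) = (lamb t r x - lamb t r y) • w := by
    simp only [pushFn, sub_smul]; abel
  rw [h, norm_smul, Real.norm_eq_abs]
  calc |lamb t r x - lamb t r y| * ‖w‖ ≤ ‖x - y‖ / r * ‖w‖ :=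
        mul_le_mul_of_nonneg_right (lamb_sub_le hr) (norm_nonneg w)
    _ = ‖w‖ / r * ‖x - y‖ := by ring

lemma pushFun_fix (h : r ≤ ‖x - t‖) (hr : 0 < r) : pushFn t w r x = x := by
  simp [pushFn, lamb_eq_zero h hr]

lemma pushFun_move (hr : 0 < r) : ‖pushFn t w r x - x‖ ≤ ‖w‖ := by
  simp only [pushFn]
  rw [add_sub_cancel_left, norm_smul, Real.norm_eq_abs,
    abs_of_nonneg (lamb_nonneg (t := t) (r := r) (x := x))]
  exact mul_le_of_le_one_left (norm_nonneg w) (lamb_le_one hr)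

lemma pushFun_lower (hr : 0 < r) :
    (1 - ‖w‖ / r) * ‖x - y‖ ≤ ‖pushFn t w r x - pushFn t w r y‖ := by
  have h := pushFun_sub (t := t) (w := w) (x := x) (y := y) hr
  have h2 : ‖x - y‖ - ‖pushFn t w r x - pushFn t w r y‖ ≤ ‖w‖ / r * ‖x - y‖ := by
    calc ‖x - y‖ - ‖pushFn t w r x - pushFn t w r y‖
        ≤ ‖pushFn t w r x - pushFn t w r y - (x - y)‖ := by
          rw [norm_sub_rev (pushFn t w r x - pushFn t w r y)]
          linarith [norm_sub_norm_le (x - y) (pushFn t w r x - pushFn t w r y)]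
      _ ≤ _ := h
  linarith

lemma pushFun_upper (hr : 0 < r) :
    ‖pushFn t w r x - pushFn t w r y‖ ≤ (1 + ‖w‖ / r) * ‖x - y‖ := by
  have h := pushFun_sub (t := t) (w := w) (x := x) (y := y) hr
  have := norm_sub_norm_le (pushFn t w r x - pushFn t w r y) (x - y)
  linarith [norm_sub_norm_le (pushFn t w r x - pushFn t w r y) (x - y)]

/-- the value of the push at the special point `q`. -/
lemma pushFun_hits (hq : ‖q - t‖ < r) (hr : 0 < r) :
    pushFn t ((1 - ‖q - t‖ / r)⁻¹ • (t - q)) r q = t := by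
  have hlt : ‖q - t‖ / r < 1 := (div_lt_one hr).2 hq
  have hl : lamb t r q = 1 - ‖q - t‖ / r := max_eq_left (by linarith)
  have hne : (1 - ‖q - t‖ / r) ≠ 0 := by linarith
  simp only [pushFn, hl, smul_smul, mul_inv_cancel₀ hne, one_smul]
  abel

lemma pushW_norm (hq : ‖q - t‖ ≤ r / 2) (hr : 0 < r) :
    ‖(1 - ‖q - t‖ / r)⁻¹ • (t - q)‖ ≤ 2 * ‖q - t‖ := by
  have h1 : ‖q - t‖ / r ≤ 1 / 2 := by
    rw [div_le_div_iff₀ hr (by norm_num)]; linarith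
  have h2 : (1:ℝ)/2 ≤ 1 - ‖q - t‖ / r := by linarith
  have h3 : (1 - ‖q - t‖ / r)⁻¹ ≤ 2 := by
    rw [inv_le_comm₀ (by linarith) (by norm_num)]; linarith
  rw [norm_smul, Real.norm_eq_abs, abs_of_pos (inv_pos.2 (by linarith)), norm_sub_rev t q]
  exact mul_le_mul_of_nonneg_right h3 (norm_nonneg _)

/-- the push as a homeomorphism of `E`. -/
noncomputable def pushHomeo (t w : E) (r : ℝ) (hr : 0 < r) (hw : ‖w‖ < r) : E ≃ₜ E := by
  have key : ApproximatesLinearOn (pushFn t w r)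
      ((ContinuousLinearEquiv.refl ℝ E : E ≃L[ℝ] E) : E →L[ℝ] E) univ
      ⟨‖w‖ / r, by positivity⟩ := by
    intro x _ y _
    exact pushFun_sub (t := t) (w := w) (x := x) (y := y) hr
  refine key.toHomeomorph _ ?_
  rcases subsingleton_or_nontrivial E with h | h
  · exact Or.inl h
  · refine Or.inr ?_
    have : ((ContinuousLinearEquiv.refl ℝ E).symm : E →L[ℝ] E) = ContinuousLinearMap.id ℝ E := by
      rfl
    rw [this]
    have hid : ‖ContinuousLinearMap.id ℝ E‖₊ = 1 := by
      ext; simpa using ContinuousLinearMap.norm_id (E := E) (𝕜 := ℝ)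
    rw [hid, inv_one]
    apply NNReal.coe_lt_coe.1
    push_cast
    exact (div_lt_one hr).2 hw

lemma pushHomeo_apply (hr : 0 < r) (hw : ‖w‖ < r) (x : E) :
    pushHomeo t w r hr hw x = pushFn t w r x := rfl

/-- state of the recursive construction. -/
structure St (E : Type*) [TopologicalSpace E] where
  G : E ≃ₜ E
  p : ℕ → E

/-- invariants of the construction after `k` steps. -/
structure Good (t : ℕ → E) (S : Set E) (k : ℕ) (s : St E) : Prop where
  fix : ∀ x : E, 1 ≤ ‖x‖ → s.G x = x
  hits : ∀ j, j < k → s.G (s.p j) = t j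
  pnotS : ∀ j, j < k → s.p j ∉ S
  pball : ∀ j, j < k → ‖s.p j‖ < 1
  lower : ∀ x y : E, (1/2 + (1/4:ℝ)^k/2) * ‖x - y‖ ≤ ‖s.G x - s.G y‖
  upper : ∀ x y : E, ‖s.G x - s.G y‖ ≤ (2 - (1/4:ℝ)^k) * ‖x - y‖

set_option maxHeartbeats 1000000 in
theorem step_exists (t : ℕ → E) (S : Set E) (ht : ∀ k, ‖t k‖ < 1) (hS : interior S = ∅)
    (k : ℕ) (s : St E) (hs : Good t S k s) :
    ∃ s' : St E, Good t S (k+1) s' ∧ (∀ x, ‖s'.G x - s.G x‖ ≤ (1/4:ℝ)^(k+1)) ∧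
      (∀ j, j < k → s'.p j = s.p j) := by
  have hpow0 : (0:ℝ) < (1/4:ℝ)^k := by positivity
  have hpow1 : (1/4:ℝ)^k ≤ 1 := pow_le_one₀ (by norm_num) (by norm_num)
  have hpowsucc : (1/4:ℝ)^(k+1) = (1/4:ℝ)^k * (1/4) := pow_succ _ _
  by_cases hdup : ∃ j, j < k ∧ t j = t k
  · obtain ⟨j₀, hj₀, hj₀t⟩ := hdup
    refine ⟨⟨s.G, Function.update s.p k (s.p j₀)⟩, ?_, ?_, ?_⟩
    · constructor
      · exact hs.fix
      · intro j hj
        dsimp only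
        rcases eq_or_lt_of_le (Nat.lt_succ_iff.1 hj) with heq | hlt
        · rw [heq, Function.update_self, hs.hits j₀ hj₀, hj₀t]
        · rw [Function.update_of_ne (Nat.ne_of_lt hlt)]
          exact hs.hits j hlt
      · intro j hj
        dsimp only
        rcases eq_or_lt_of_le (Nat.lt_succ_iff.1 hj) with heq | hlt
        · rw [heq, Function.update_self]; exact hs.pnotS j₀ hj₀
        · rw [Function.update_of_ne (Nat.ne_of_lt hlt)]; exact hs.pnotS j hlt
      · intro j hj
        dsimp only
        rcases eq_or_lt_of_le (Nat.lt_succ_iff.1 hj) with heq | hlt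
        · rw [heq, Function.update_self]; exact hs.pball j₀ hj₀
        · rw [Function.update_of_ne (Nat.ne_of_lt hlt)]; exact hs.pball j hlt
      · intro x y
        dsimp only
        refine le_trans ?_ (hs.lower x y)
        have := norm_nonneg (x - y)
        nlinarith
      · intro x y
        dsimp only
        refine (hs.upper x y).trans ?_
        have := norm_nonneg (x - y)
        nlinarith
    · intro x; dsimp only; simp only [sub_self, norm_zero]; positivity
    · intro j hj; dsimp only; exact Function.update_of_ne (Nat.ne_of_lt hj) _ _
  · push_neg at hdup
    set r : ℝ := min (1 - ‖t k‖)
      (if hk : k = 0 then 1 else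
        (Finset.range k).inf' (Finset.nonempty_range_iff.2 hk) fun j => ‖t j - t k‖) with hrdef
    have hr : 0 < r := by
      refine lt_min (by linarith [ht k]) ?_
      split_ifs with hk
      · norm_num
      · rw [Finset.lt_inf'_iff]
        intro j hj
        rw [norm_pos_iff, sub_ne_zero]
        exact hdup j (Finset.mem_range.1 hj)
    have hrt : ∀ j, j < k → r ≤ ‖t j - t k‖ := by
      intro j hj
      refine (min_le_right _ _).trans ?_
      rw [dif_neg (by omega)]
      exact Finset.inf'_le _ (Finset.mem_range.2 hj)
    have hr1 : r ≤ 1 - ‖t k‖ := min_le_left _ _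
    set ρ : ℝ := min r 1 * (1/4:ℝ)^(k+2) with hρdef
    have hρ : 0 < ρ := mul_pos (lt_min hr one_pos) (by positivity)
    have hρr : ρ ≤ r * (1/4) := by
      have h1 : (1/4:ℝ)^(k+2) ≤ (1/4:ℝ)^1 :=
        pow_le_pow_of_le_one (by norm_num) (by norm_num) (by omega)
      calc ρ ≤ r * (1/4:ℝ)^(k+2) :=
            mul_le_mul_of_nonneg_right (min_le_left _ _) (by positivity)
        _ ≤ r * (1/4) := by
            refine mul_le_mul_of_nonneg_left (h1.trans_eq (by norm_num)) hr.le
    -- choose the point y outside the image of S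
    have himg : interior (⇑s.G '' S) = ∅ := by
      rw [← Homeomorph.image_interior, hS, image_empty]
    have hnsub : ¬ ball (t k) ρ ⊆ ⇑s.G '' S := by
      intro hsub
      have h2 : ball (t k) ρ ⊆ interior (⇑s.G '' S) := interior_maximal hsub isOpen_ball
      rw [himg] at h2
      exact h2 (mem_ball_self hρ)
    obtain ⟨y, hyb, hyS⟩ := not_subset.1 hnsub
    have hyt : ‖y - t k‖ < ρ := by rwa [mem_ball, dist_eq_norm] at hyb
    have hsr : ‖y - t k‖ ≤ r / 2 := by linarith
    have hylt : ‖y - t k‖ < r := by linarith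
    have hy1 : ‖y‖ < 1 := by
      have h3 := norm_sub_norm_le y (t k)
      linarith
    set w : E := (1 - ‖y - t k‖ / r)⁻¹ • (t k - y) with hwdef
    have hw2 : ‖w‖ ≤ 2 * ‖y - t k‖ := pushW_norm hsr hr
    have hw4 : ‖w‖ ≤ min r 1 * ((1/4:ℝ)^(k+1) / 2) := by
      have : 2 * ρ = min r 1 * ((1/4:ℝ)^(k+1) / 2) := by
        rw [hρdef, pow_succ, pow_succ]; ring
      linarith
    have hwbound : ‖w‖ ≤ (1/4:ℝ)^(k+1) := by
      have h1 : min r 1 ≤ 1 := min_le_right _ _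
      have h2 : (0:ℝ) < (1/4:ℝ)^(k+1) := by positivity
      nlinarith [lt_min hr one_pos]
    have hK : ‖w‖ / r ≤ (1/4:ℝ)^(k+1) := by
      rw [div_le_iff₀ hr]
      have h1 : min r 1 ≤ r := min_le_left _ _
      have h2 : (0:ℝ) < (1/4:ℝ)^(k+1) := by positivity
      nlinarith [lt_min hr one_pos]
    have hwr : ‖w‖ < r := by
      have h2 : (0:ℝ) < (1/4:ℝ)^(k+1) := by positivity
      have h3 : (1/4:ℝ)^(k+1) ≤ 1 := pow_le_one₀ (by norm_num) (by norm_num)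
      have := (div_le_iff₀ hr).1 hK
      nlinarith
    have hKnn : 0 ≤ ‖w‖ / r := by positivity
    set φ : E ≃ₜ E := pushHomeo (t k) w r hr hwr with hφdef
    have hφ : ∀ z, φ z = pushFn (t k) w r z := pushHomeo_apply hr hwr
    have htr : ∀ z, (s.G.trans φ) z = pushFn (t k) w r (s.G z) := fun z => by
      rw [Homeomorph.trans_apply, hφ]
    refine ⟨⟨s.G.trans φ, Function.update s.p k (s.G.symm y)⟩, ?_, ?_, ?_⟩
    · constructor
      · intro x hx
        dsimp only
        rw [htr, hs.fix x hx]
        refine pushFun_fix ?_ hr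
        have h3 := norm_sub_norm_le x (t k)
        linarith
      · intro j hj
        dsimp only
        rw [htr]
        rcases eq_or_lt_of_le (Nat.lt_succ_iff.1 hj) with heq | hlt
        · rw [heq, Function.update_self, Homeomorph.apply_symm_apply, hwdef]
          exact pushFun_hits hylt hr
        · rw [Function.update_of_ne (Nat.ne_of_lt hlt), hs.hits j hlt]
          exact pushFun_fix (hrt j hlt) hr
      · intro j hj
        dsimp only
        rcases eq_or_lt_of_le (Nat.lt_succ_iff.1 hj) with heq | hlt
        · rw [heq, Function.update_self]
          intro hpS
          exact hyS ⟨_, hpS, s.G.apply_symm_apply y⟩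
        · rw [Function.update_of_ne (Nat.ne_of_lt hlt)]; exact hs.pnotS j hlt
      · intro j hj
        dsimp only
        rcases eq_or_lt_of_le (Nat.lt_succ_iff.1 hj) with heq | hlt
        · rw [heq, Function.update_self]
          by_contra h
          push_neg at h
          have h1 : s.G (s.G.symm y) = s.G.symm y := hs.fix _ h
          rw [s.G.apply_symm_apply] at h1
          rw [← h1] at h
          linarith
        · rw [Function.update_of_ne (Nat.ne_of_lt hlt)]; exact hs.pball j hlt
      · intro x y'
        dsimp only
        rw [htr, htr]
        have h1 := pushFun_lower (t := t k) (w := w) (x := s.G x) (y := s.G y') hr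
        have h2 := hs.lower x y'
        have h4 : (0:ℝ) ≤ 1 - (1/4:ℝ)^(k+1) := by nlinarith
        have h3 : (1 - (1/4:ℝ)^(k+1)) * ((1/2 + (1/4:ℝ)^k/2) * ‖x - y'‖)
            ≤ (1 - ‖w‖/r) * ‖s.G x - s.G y'‖ := by
          have h5 : 1 - (1/4:ℝ)^(k+1) ≤ 1 - ‖w‖/r := by linarith
          have h6 : (0:ℝ) ≤ (1/2 + (1/4:ℝ)^k/2) * ‖x - y'‖ := by positivity
          exact mul_le_mul h5 h2 h6 (by linarith)
        have h7 := norm_nonneg (x - y')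
        have harith : (1/2 + (1/4:ℝ)^(k+1)/2) * ‖x - y'‖
            ≤ (1 - (1/4:ℝ)^(k+1)) * ((1/2 + (1/4:ℝ)^k/2) * ‖x - y'‖) := by
          rw [hpowsucc]
          nlinarith [mul_nonneg (mul_nonneg hpow0.le h7)
            (by linarith : (0:ℝ) ≤ 2 - (1/4:ℝ)^k)]
        linarith
      · intro x y'
        dsimp only
        rw [htr, htr]
        have h1 := pushFun_upper (t := t k) (w := w) (x := s.G x) (y := s.G y') hr
        have h2 := hs.upper x y'
        have h7 := norm_nonneg (x - y')
        have h8 := norm_nonneg (s.G x - s.G y')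
        have h9 : (1 + ‖w‖/r) * ‖s.G x - s.G y'‖
            ≤ (1 + (1/4:ℝ)^(k+1)) * ((2 - (1/4:ℝ)^k) * ‖x - y'‖) := by
          refine mul_le_mul (by linarith) h2 h8 (by nlinarith)
        have harith : (1 + (1/4:ℝ)^(k+1)) * ((2 - (1/4:ℝ)^k) * ‖x - y'‖)
            ≤ (2 - (1/4:ℝ)^(k+1)) * ‖x - y'‖ := by
          rw [hpowsucc]
          nlinarith [mul_nonneg (mul_nonneg hpow0.le h7)
            (by linarith : (0:ℝ) ≤ 2 - (1/4:ℝ)^k),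
            mul_nonneg (mul_nonneg hpow0.le hpow0.le) h7]
        linarith
    · intro x
      dsimp only
      rw [htr]
      exact (pushFun_move hr).trans hwbound
    · intro j hj
      dsimp only
      exact Function.update_of_ne (Nat.ne_of_lt hj) _ _

variable (t : ℕ → E) (S : Set E) (ht : ∀ k, ‖t k‖ < 1) (hS : interior S = ∅)

def chain0 : {s : St E // Good t S 0 s} := by
  refine ⟨⟨Homeomorph.refl E, fun _ => 0⟩, ?_, ?_, ?_, ?_, ?_, ?_⟩
  · intro x _; rfl
  · intro j hj; exact absurd hj (Nat.not_lt_zero j)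
  · intro j hj; exact absurd hj (Nat.not_lt_zero j)
  · intro j hj; exact absurd hj (Nat.not_lt_zero j)
  · intro x y; simp [Homeomorph.refl_apply]; norm_num
  · intro x y; simp [Homeomorph.refl_apply]; norm_num

def chain : (k : ℕ) → {s : St E // Good t S k s} :=
  Nat.rec (chain0 t S) (fun k ih =>
    ⟨(step_exists t S ht hS k ih.1 ih.2).choose,
     (step_exists t S ht hS k ih.1 ih.2).choose_spec.1⟩)

lemma chain_move (k : ℕ) :
    ∀ x, ‖(chain t S ht hS (k+1)).1.G x - (chain t S ht hS k).1.G x‖ ≤ (1/4:ℝ)^(k+1) :=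
  (step_exists t S ht hS k (chain t S ht hS k).1 (chain t S ht hS k).2).choose_spec.2.1

lemma chain_peq (k : ℕ) :
    ∀ j, j < k → (chain t S ht hS (k+1)).1.p j = (chain t S ht hS k).1.p j :=
  (step_exists t S ht hS k (chain t S ht hS k).1 (chain t S ht hS k).2).choose_spec.2.2

include ht hS in
theorem exists_avoid :
    ∃ H : E → E, (∀ x y : E, (1/2) * ‖x - y‖ ≤ ‖H x - H y‖) ∧
      (∀ x y : E, ‖H x - H y‖ ≤ 2 * ‖x - y‖) ∧
      (∀ x : E, 1 ≤ ‖x‖ → H x = x) ∧ (∀ x : E, ‖x‖ ≤ 1 → ‖H x‖ ≤ 1) ∧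
      (∀ x : E, ‖x‖ < 1 → ‖H x‖ < 1) ∧
      (∀ k, ∃ p, p ∉ S ∧ H p = t k) := by
  classical
  set C := chain t S ht hS with hC
  set G : ℕ → E → E := fun k x => (C k).1.G x with hGdef
  have hmove : ∀ k x, ‖G (k+1) x - G k x‖ ≤ (1/4:ℝ)^(k+1) := fun k x =>
    chain_move t S ht hS k x
  have hu : ∀ x k, dist (G k x) (G (k+1) x) ≤ (1/4) * (1/4:ℝ)^k := by
    intro x k
    rw [dist_eq_norm, norm_sub_rev]
    calc ‖G (k+1) x - G k x‖ ≤ (1/4:ℝ)^(k+1) := hmove k x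
      _ = (1/4) * (1/4:ℝ)^k := by rw [pow_succ]; ring
  have hcauchy : ∀ x : E, CauchySeq (fun k => G k x) := fun x =>
    cauchySeq_of_le_geometric (1/4) (1/4) (by norm_num) (hu x)
  set H : E → E := fun x => limUnder atTop (fun k => G k x) with hHdef
  have hlim : ∀ x, Tendsto (fun k => G k x) atTop (𝓝 (H x)) := fun x =>
    (hcauchy x).tendsto_limUnder
  have htail : ∀ k x, ‖G k x - H x‖ ≤ (1/4:ℝ)^k := by
    intro k x
    have h1 := dist_le_of_le_geometric_of_tendsto (1/4) (1/4) (by norm_num) (hu x) (hlim x) k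
    rw [dist_eq_norm] at h1
    have h2 : (0:ℝ) < (1/4:ℝ)^k := by positivity
    calc ‖G k x - H x‖ ≤ 1/4 * (1/4:ℝ)^k / (1 - 1/4) := h1
      _ ≤ (1/4:ℝ)^k := by rw [div_le_iff₀ (by norm_num)]; nlinarith
  have hpow0 : ∀ k, (0:ℝ) < (1/4:ℝ)^k := fun k => by positivity
  have hlower : ∀ x y : E, (1/2) * ‖x - y‖ ≤ ‖H x - H y‖ := by
    intro x y
    have hT : Tendsto (fun k => ‖G k x - G k y‖) atTop (𝓝 ‖H x - H y‖) :=
      ((hlim x).sub (hlim y)).norm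
    refine ge_of_tendsto hT (Eventually.of_forall fun k => ?_)
    have h1 := (C k).2.lower x y
    have h2 := norm_nonneg (x - y)
    nlinarith [ (hpow0 k).le ]
  have hupper : ∀ x y : E, ‖H x - H y‖ ≤ 2 * ‖x - y‖ := by
    intro x y
    have hT : Tendsto (fun k => ‖G k x - G k y‖) atTop (𝓝 ‖H x - H y‖) :=
      ((hlim x).sub (hlim y)).norm
    refine le_of_tendsto hT (Eventually.of_forall fun k => ?_)
    have h1 := (C k).2.upper x y
    have h2 := norm_nonneg (x - y)
    nlinarith [ (hpow0 k).le ]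
  have hinj : Function.Injective H := by
    intro a b hab
    have h1 := hlower a b
    rw [hab, sub_self, norm_zero] at h1
    have h2 := norm_nonneg (a - b)
    have : ‖a - b‖ = 0 := le_antisymm (by linarith) h2
    rwa [norm_sub_eq_zero_iff] at this
  have hfix : ∀ x : E, 1 ≤ ‖x‖ → H x = x := by
    intro x hx
    have h1 : (fun k => G k x) = fun _ => x := funext fun k => (C k).2.fix x hx
    have h2 : Tendsto (fun k => G k x) atTop (𝓝 x) := by
      rw [h1]; exact tendsto_const_nhds
    exact tendsto_nhds_unique (hlim x) h2
  have hGball : ∀ k (x : E), ‖x‖ ≤ 1 → ‖G k x‖ ≤ 1 := by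
    intro k x hx
    by_contra h
    push_neg at h
    have h1 : (C k).1.G (G k x) = G k x := (C k).2.fix _ h.le
    have h2 : G k x = x := (C k).1.G.injective h1
    rw [h2] at h
    linarith
  have hball : ∀ x : E, ‖x‖ ≤ 1 → ‖H x‖ ≤ 1 := by
    intro x hx
    have hT : Tendsto (fun k => ‖G k x‖) atTop (𝓝 ‖H x‖) := (hlim x).norm
    exact le_of_tendsto hT (Eventually.of_forall fun k => hGball k x hx)
  have hstrict : ∀ x : E, ‖x‖ < 1 → ‖H x‖ < 1 := by
    intro x hx
    rcases lt_or_eq_of_le (hball x hx.le) with h | h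
    · exact h
    · exfalso
      have h1 : H (H x) = H x := hfix _ h.ge
      have h2 : H x = x := hinj h1
      rw [h2] at h
      exact hx.ne h
  refine ⟨H, hlower, hupper, hfix, hball, hstrict, ?_⟩
  intro k
  refine ⟨(C (k+1)).1.p k, (C (k+1)).2.pnotS k (Nat.lt_succ_self k), ?_⟩
  set p := (C (k+1)).1.p k with hp
  have hstab : ∀ m, k < m → (C m).1.p k = p := by
    intro m hm
    induction m, hm using Nat.le_induction with
    | base => rfl
    | succ m hm ih => rw [← ih]; exact chain_peq t S ht hS m k hm
  have hGm : ∀ m, k < m → G m p = t k := by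
    intro m hm
    have := (C m).2.hits k hm
    rwa [hstab m hm] at this
  have hT2 : Tendsto (fun m => G m p) atTop (𝓝 (t k)) := by
    refine Tendsto.congr' ?_ (tendsto_const_nhds : Tendsto (fun _ : ℕ => t k) atTop (𝓝 (t k)))
    filter_upwards [eventually_gt_atTop k] with m hm
    exact (hGm m hm).symm
  exact tendsto_nhds_unique (hlim p) hT2


end AvoidCountable

theorem stmt2 (n : ℕ) (hn : 1 ≤ n)
    (A : Type*) [TopologicalSpace A]
    (f : A → EuclideanSpace ℝ (Fin n))
    (hf : Topology.IsEmbedding f)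
    (hfD : Set.range f ⊆ Metric.closedBall (0 : EuclideanSpace ℝ (Fin n)) 1)
    (hint : interior (Set.range f) = ∅)
    (T : Set (EuclideanSpace ℝ (Fin n)))
    (hT : T.Countable) (hTball : T ⊆ Metric.ball (0 : EuclideanSpace ℝ (Fin n)) 1) :
    ∃ g : A → EuclideanSpace ℝ (Fin n),
      Topology.IsEmbedding g ∧
      Set.range g ⊆ Metric.closedBall (0 : EuclideanSpace ℝ (Fin n)) 1 \ T ∧
      f ⁻¹' Metric.sphere (0 : EuclideanSpace ℝ (Fin n)) 1
        = g ⁻¹' Metric.sphere (0 : EuclideanSpace ℝ (Fin n)) 1 ∧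
      ∀ a : A, f a ∈ Metric.sphere (0 : EuclideanSpace ℝ (Fin n)) 1 → g a = f a := by
  classical
  rcases T.eq_empty_or_nonempty with rfl | hne
  · exact ⟨f, hf, by simpa using hfD, rfl, fun a _ => rfl⟩
  obtain ⟨t, hTt⟩ := hT.exists_eq_range hne
  have ht : ∀ k, ‖t k‖ < 1 := by
    intro k
    have hmem : t k ∈ T := hTt ▸ mem_range_self k
    exact mem_ball_zero_iff.1 (hTball hmem)
  obtain ⟨H, hlower, hupper, hfix, hball, hstrict, hhits⟩ :=
    exists_avoid t (Set.range f) ht hint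
  have hHlip : LipschitzWith 2 H := by
    apply LipschitzWith.of_dist_le_mul
    intro x y
    rw [dist_eq_norm, dist_eq_norm]
    have := hupper x y
    push_cast
    linarith
  have hHanti : AntilipschitzWith 2 H := by
    rw [antilipschitzWith_iff_le_mul_dist]
    intro x y
    rw [dist_eq_norm, dist_eq_norm]
    have := hlower x y
    push_cast
    linarith
  have hHemb : Topology.IsEmbedding H :=
    (hHanti.isUniformEmbedding hHlip.uniformContinuous).isEmbedding
  have hinj : Function.Injective H := hHemb.injective
  have hfball : ∀ a, ‖f a‖ ≤ 1 := fun a =>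
    mem_closedBall_zero_iff.1 (hfD (mem_range_self a))
  refine ⟨H ∘ f, hHemb.comp hf, ?_, ?_, ?_⟩
  · rintro _ ⟨a, rfl⟩
    refine ⟨mem_closedBall_zero_iff.2 (hball _ (hfball a)), ?_⟩
    intro hmem
    have hmem2 : (H ∘ f) a ∈ range t := hTt ▸ hmem
    obtain ⟨k, hk⟩ := hmem2
    obtain ⟨p, hpS, hpt⟩ := hhits k
    have heq : H (f a) = H p := by
      rw [hpt]; exact hk.symm
    exact hpS (hinj heq ▸ mem_range_self a)
  · ext a
    simp only [mem_preimage, mem_sphere_zero_iff_norm, Function.comp_apply]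
    constructor
    · intro h
      rw [hfix (f a) h.ge]
      exact h
    · intro h
      by_contra hne'
      have hlt : ‖f a‖ < 1 := lt_of_le_of_ne (hfball a) hne'
      exact absurd h (ne_of_lt (hstrict _ hlt))
  · intro a ha
    have h1 : ‖f a‖ = 1 := mem_sphere_zero_iff_norm.1 ha
    exact hfix _ h1.ge
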